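/- Let M, A ∈ ℕ with M ≥ 3 and 1 < A < M, let L ≥ 1, and let 𝒜 ⊆ {0,...,M−1} with Card(𝒜) = A. Suppose that for every integer m with 1 ≤ |m| ≤ M−1 one has |∑_{l∈𝒜} e^{2πiml/M}| ≤ L·√A. Then the operator norm satisfies ‖1_𝒜 F_M 1_𝒜‖_{ℓ²_M→ℓ²_M} ≤ √(2L·A^{3/2}/M). -/

import Mathlib

open scoped BigOperators

/-- The discrete Fourier transform matrix `F_N`,
with entries `(F_N)_{j l} = N^{-1/2} e^{-2π i j l / N}`. -/
noncomputable def dftMatrix (N : ℕ) : Matrix (Fin N) (Fin N) ℂ :=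
  fun j l => (1 / Real.sqrt N : ℝ) *
    Complex.exp (-(2 * Real.pi * Complex.I * (j : ℕ) * (l : ℕ)) / N)

/-- The discrete Cantor set `C_k(M, 𝒜) = {∑ a_j M^j : a_j ∈ 𝒜}` as a finset of naturals. -/
def discCantor (M k : ℕ) (A : Finset ℕ) : Finset ℕ :=
  (Fintype.piFinset (fun _ : Fin k => A)).image (fun a => ∑ i : Fin k, a i * M ^ (i : ℕ))

/-- The matrix of the operator `1_{C_k(M,𝒜)} F_N 1_{C_k(M,𝒜)}` on `ℓ²_N`, where `N = M^k`. -/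
noncomputable def cantorOp (M k : ℕ) (A : Finset ℕ) :
    Matrix (Fin (M ^ k)) (Fin (M ^ k)) ℂ :=
  fun j l => if (j : ℕ) ∈ discCantor M k A ∧ (l : ℕ) ∈ discCantor M k A
    then dftMatrix (M ^ k) j l else 0

/-- `r_k = ‖1_{C_k(M,𝒜)} F_N 1_{C_k(M,𝒜)}‖_{ℓ²_N → ℓ²_N}`, the operator norm on
`ℓ²_N = EuclideanSpace ℂ (Fin N)` with `N = M^k`. -/
noncomputable def rNorm (M k : ℕ) (A : Finset ℕ) : ℝ :=
  ‖Matrix.toEuclideanCLM (𝕜 := ℂ) (cantorOp M k A)‖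

/-- The space of alphabets `𝔄(M, A)`: subsets of `{0, …, M-1}` of cardinality `A`. -/
def alphabets (M A : ℕ) : Finset (Finset ℕ) :=
  (Finset.range M).powersetCard A

/-- The matrix of the operator `1_𝒜 F_M 1_𝒜` on `ℓ²_M`. -/
noncomputable def alphOp (M : ℕ) (𝒜 : Finset ℕ) : Matrix (Fin M) (Fin M) ℂ :=
  fun j l => if (j : ℕ) ∈ 𝒜 ∧ (l : ℕ) ∈ 𝒜 then dftMatrix M j l else 0

/-- Frobenius-type bound for the `ℓ² → ℓ²` operator norm of a matrix. -/
lemma opNorm_le_frob {n : ℕ} (C : Matrix (Fin n) (Fin n) ℂ) :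
    ‖Matrix.toEuclideanCLM (𝕜 := ℂ) C‖ ≤
      Real.sqrt (∑ j, ∑ l, ‖C j l‖ ^ 2) := by
  set S := ∑ j, ∑ l, ‖C j l‖ ^ 2 with hSdef
  have hS0 : 0 ≤ S := Finset.sum_nonneg fun _ _ => Finset.sum_nonneg fun _ _ => sq_nonneg _
  apply ContinuousLinearMap.opNorm_le_bound _ (Real.sqrt_nonneg S)
  intro x
  have key : ‖(Matrix.toEuclideanCLM (𝕜 := ℂ) C) x‖ ^ 2 ≤ S * ‖x‖ ^ 2 := by
    have hTx : ∀ j, ((Matrix.toEuclideanCLM (𝕜 := ℂ) C) x) j = ∑ l, C j l * x l :=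
      fun _ => rfl
    have hnx : ‖x‖ ^ 2 = ∑ l, ‖x l‖ ^ 2 := by
      rw [EuclideanSpace.norm_eq, Real.sq_sqrt (Finset.sum_nonneg fun _ _ => sq_nonneg _)]
    have hTx2 : ‖(Matrix.toEuclideanCLM (𝕜 := ℂ) C) x‖ ^ 2 =
        ∑ j, ‖((Matrix.toEuclideanCLM (𝕜 := ℂ) C) x) j‖ ^ 2 := by
      rw [EuclideanSpace.norm_eq, Real.sq_sqrt (Finset.sum_nonneg fun _ _ => sq_nonneg _)]
    rw [hTx2, hnx, hSdef, Finset.sum_mul]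
    apply Finset.sum_le_sum
    intro j _
    rw [hTx]
    calc ‖∑ l, C j l * x l‖ ^ 2
        ≤ (∑ l, ‖C j l‖ * ‖x l‖) ^ 2 := by
          apply pow_le_pow_left₀ (norm_nonneg _)
          refine (norm_sum_le _ _).trans_eq ?_
          simp [map_mul]
      _ ≤ (∑ l, ‖C j l‖ ^ 2) * ∑ l, ‖x l‖ ^ 2 :=
          Finset.sum_mul_sq_le_sq_mul_sq _ _ _
  calc ‖(Matrix.toEuclideanCLM (𝕜 := ℂ) C) x‖
      = Real.sqrt (‖(Matrix.toEuclideanCLM (𝕜 := ℂ) C) x‖ ^ 2) :=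
        (Real.sqrt_sq (norm_nonneg _)).symm
    _ ≤ Real.sqrt (S * ‖x‖ ^ 2) := Real.sqrt_le_sqrt key
    _ = Real.sqrt S * ‖x‖ := by
        rw [Real.sqrt_mul hS0, Real.sqrt_sq (norm_nonneg _)]

/-- Entry formula for `(1_𝒜 F_M 1_𝒜)ᴴ (1_𝒜 F_M 1_𝒜)` on `𝒜 × 𝒜`. -/
lemma alphOp_gram_entry (M : ℕ) (𝒜 : Finset ℕ) (h𝒜 : 𝒜 ⊆ Finset.range M)
    (j l : Fin M) (hj : (j : ℕ) ∈ 𝒜) (hl : (l : ℕ) ∈ 𝒜) :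
    ((alphOp M 𝒜).conjTranspose * alphOp M 𝒜) j l =
      ((1 / (M : ℝ) : ℝ) : ℂ) *
        ∑ n ∈ 𝒜, Complex.exp (2 * Real.pi * Complex.I *
          ((((j : ℕ) : ℤ) - ((l : ℕ) : ℤ) : ℤ) : ℂ) * (n : ℕ) / M) := by
  rw [Matrix.mul_apply]
  have hterm : ∀ m : Fin M, (alphOp M 𝒜).conjTranspose j m * alphOp M 𝒜 m l =
      if (m : ℕ) ∈ 𝒜 then
        ((1 / (M : ℝ) : ℝ) : ℂ) * Complex.exp (2 * Real.pi * Complex.I *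
          ((((j : ℕ) : ℤ) - ((l : ℕ) : ℤ) : ℤ) : ℂ) * ((m : ℕ) : ℕ) / M) else 0 := by
    intro m
    rw [Matrix.conjTranspose_apply]
    by_cases hm : (m : ℕ) ∈ 𝒜
    · simp only [alphOp, dftMatrix]
      rw [if_pos (show ((m:ℕ) ∈ 𝒜 ∧ (j:ℕ) ∈ 𝒜) from ⟨hm, hj⟩),
        if_pos (show ((m:ℕ) ∈ 𝒜 ∧ (l:ℕ) ∈ 𝒜) from ⟨hm, hl⟩), if_pos hm]
      simp only [star_mul', Complex.star_def]
      rw [← Complex.exp_conj]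
      have h1 : (starRingEnd ℂ) ((1 / Real.sqrt M : ℝ) : ℂ) = ((1 / Real.sqrt M : ℝ) : ℂ) :=
        Complex.conj_ofReal _
      have h2 : (starRingEnd ℂ) (-(2 * ↑Real.pi * Complex.I * ((m : ℕ) : ℂ) * ((j : ℕ) : ℂ)) / (M : ℂ)) =
          (2 * ↑Real.pi * Complex.I * ((m : ℕ) : ℂ) * ((j : ℕ) : ℂ)) / (M : ℂ) := by
        simp [map_div₀, map_neg, map_mul, map_ofNat, Complex.conj_I, Complex.conj_ofReal]
      rw [h1, h2]
      have hr : ((1 / Real.sqrt M : ℝ) : ℂ) * (((1 / Real.sqrt M : ℝ) : ℂ)) =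
          ((1 / (M : ℝ) : ℝ) : ℂ) := by
        rw [← Complex.ofReal_mul]
        congr 1
        rw [div_mul_div_comm, one_mul, Real.mul_self_sqrt (Nat.cast_nonneg M)]
      calc ((1 / Real.sqrt M : ℝ) : ℂ) * Complex.exp (2 * ↑Real.pi * Complex.I * ((m:ℕ):ℂ) * ((j:ℕ):ℂ) / (M:ℂ)) *
            (((1 / Real.sqrt M : ℝ) : ℂ) * Complex.exp (-(2 * ↑Real.pi * Complex.I * ((m:ℕ):ℂ) * ((l:ℕ):ℂ)) / (M:ℂ)))
          = (((1 / Real.sqrt M : ℝ) : ℂ) * ((1 / Real.sqrt M : ℝ) : ℂ)) *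
            (Complex.exp (2 * ↑Real.pi * Complex.I * ((m:ℕ):ℂ) * ((j:ℕ):ℂ) / (M:ℂ)) *
             Complex.exp (-(2 * ↑Real.pi * Complex.I * ((m:ℕ):ℂ) * ((l:ℕ):ℂ)) / (M:ℂ))) := by ring
        _ = ((1 / (M : ℝ) : ℝ) : ℂ) * Complex.exp (2 * Real.pi * Complex.I *
              ((((j : ℕ) : ℤ) - ((l : ℕ) : ℤ) : ℤ) : ℂ) * ((m : ℕ) : ℕ) / M) := by
            rw [hr, ← Complex.exp_add]
            congr 1
            push_cast
            ring
    · simp [alphOp, hm]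
  rw [Finset.sum_congr rfl (fun m _ => hterm m), Finset.mul_sum]
  have conv : ∀ g : ℕ → ℂ, ∑ m : Fin M, (if (m : ℕ) ∈ 𝒜 then g (m : ℕ) else 0)
      = ∑ n ∈ 𝒜, g n := by
    intro g
    rw [Fin.sum_univ_eq_sum_range (fun n => if n ∈ 𝒜 then g n else 0) M,
      Finset.sum_ite_mem, Finset.inter_eq_right.mpr h𝒜]
  exact conv (fun n => ((1 / (M : ℝ) : ℝ) : ℂ) * Complex.exp (2 * Real.pi * Complex.I *
    ((((j : ℕ) : ℤ) - ((l : ℕ) : ℤ) : ℤ) : ℂ) * (n : ℕ) / M))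

lemma alphOp_gram_entry_zero (M : ℕ) (𝒜 : Finset ℕ) (j l : Fin M)
    (h : ¬ ((j : ℕ) ∈ 𝒜 ∧ (l : ℕ) ∈ 𝒜)) :
    ((alphOp M 𝒜).conjTranspose * alphOp M 𝒜) j l = 0 := by
  rw [Matrix.mul_apply]
  apply Finset.sum_eq_zero
  intro m _
  rw [Matrix.conjTranspose_apply]
  rcases not_and_or.mp h with hj | hl
  · have : alphOp M 𝒜 m j = 0 := by simp [alphOp, hj]
    rw [this, star_zero, zero_mul]
  · have : alphOp M 𝒜 m l = 0 := by simp [alphOp, hl]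
    rw [this, mul_zero]

/-- Schur-test bound used in the proof of Theorem 1.2: if every
exponential sum `∑_{l ∈ 𝒜} e^{2πiml/M}`, `1 ≤ |m| ≤ M-1`, is at most `L √A`, then
`‖1_𝒜 F_M 1_𝒜‖_{ℓ²_M → ℓ²_M} ≤ √(2 L A^{3/2} / M)`. -/
theorem stmt15 (M A : ℕ) (hM : 3 ≤ M) (hA1 : 1 < A) (hA2 : A < M)
    (L : ℝ) (hL : 1 ≤ L)
    (𝒜 : Finset ℕ) (h𝒜 : 𝒜 ⊆ Finset.range M) (hcard : 𝒜.card = A)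
    (hsum : ∀ m : ℤ, 1 ≤ |m| → |m| ≤ (M : ℤ) - 1 →
      ‖∑ l ∈ 𝒜, Complex.exp (2 * Real.pi * Complex.I * m * l / M)‖ ≤
        L * Real.sqrt A) :
    ‖Matrix.toEuclideanCLM (𝕜 := ℂ) (alphOp M 𝒜)‖ ≤
      Real.sqrt (2 * L * (A : ℝ) ^ ((3 : ℝ) / 2) / M) := by
  classical
  have hM0 : (0:ℝ) < M := by positivity
  have hA0 : (0:ℝ) < A := by positivity
  set c1 : ℝ := (A : ℝ) / M with hc1
  set c2 : ℝ := L * Real.sqrt A / M with hc2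
  have hc20 : 0 ≤ c2 := by positivity
  set C := (alphOp M 𝒜).conjTranspose * alphOp M 𝒜 with hCdef
  -- entrywise bound
  have hent : ∀ j l : Fin M, ‖C j l‖ ≤
      (if ((j:ℕ) ∈ 𝒜 ∧ (l:ℕ) ∈ 𝒜) then (if j = l then c1 else c2) else 0) := by
    intro j l
    by_cases h : ((j:ℕ) ∈ 𝒜 ∧ (l:ℕ) ∈ 𝒜)
    · rw [if_pos h]
      have he := alphOp_gram_entry M 𝒜 h𝒜 j l h.1 h.2
      rw [hCdef, he, norm_mul, Complex.norm_of_nonneg (by positivity)]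
      by_cases hjl : j = l
      · rw [if_pos hjl]
        subst hjl
        have : ∀ n ∈ 𝒜, Complex.exp (2 * Real.pi * Complex.I *
            ((((j : ℕ) : ℤ) - ((j : ℕ) : ℤ) : ℤ) : ℂ) * (n : ℕ) / M) = 1 := by
          intro n _
          simp
        rw [Finset.sum_congr rfl this, Finset.sum_const, hcard, nsmul_eq_mul, mul_one,
          Complex.norm_natCast, hc1]
        apply le_of_eq
        ring
      · rw [if_neg hjl]
        set m0 : ℤ := ((j : ℕ) : ℤ) - ((l : ℕ) : ℤ) with hm0
        have hne : ((j:ℕ) : ℤ) ≠ ((l:ℕ) : ℤ) := by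
          exact_mod_cast fun hh => hjl (Fin.ext hh)
        have h1 : 1 ≤ |m0| := Int.one_le_abs (sub_ne_zero.mpr hne)
        have h2 : |m0| ≤ (M : ℤ) - 1 := by
          have hj' : ((j:ℕ) : ℤ) < M := by exact_mod_cast j.isLt
          have hl' : ((l:ℕ) : ℤ) < M := by exact_mod_cast l.isLt
          have hj0 : (0:ℤ) ≤ ((j:ℕ) : ℤ) := by positivity
          have hl0 : (0:ℤ) ≤ ((l:ℕ) : ℤ) := by positivity
          rw [abs_le]
          omega
        have := hsum m0 h1 h2
        calc 1 / (M:ℝ) * ‖∑ n ∈ 𝒜, Complex.exp (2 * Real.pi * Complex.I *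
              ((m0 : ℤ) : ℂ) * (n : ℕ) / M)‖
            ≤ 1 / (M:ℝ) * (L * Real.sqrt A) := by
              apply mul_le_mul_of_nonneg_left this (by positivity)
          _ = c2 := by rw [hc2]; ring
    · rw [if_neg h, hCdef, alphOp_gram_entry_zero M 𝒜 j l h]
      simp
  -- squared-norm identity
  have hTsq : ‖Matrix.toEuclideanCLM (𝕜 := ℂ) (alphOp M 𝒜)‖ ^ 2 =
      ‖Matrix.toEuclideanCLM (𝕜 := ℂ) C‖ := by
    rw [hCdef, map_mul, ← Matrix.star_eq_conjTranspose, map_star,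
      ContinuousLinearMap.star_eq_adjoint, ContinuousLinearMap.mul_def,
      ContinuousLinearMap.norm_adjoint_comp_self]
    ring
  have convR : ∀ g : ℕ → ℝ, ∑ m : Fin M, (if (m : ℕ) ∈ 𝒜 then g (m : ℕ) else 0)
      = ∑ n ∈ 𝒜, g n := by
    intro g
    rw [Fin.sum_univ_eq_sum_range (fun n => if n ∈ 𝒜 then g n else 0) M,
      Finset.sum_ite_mem, Finset.inter_eq_right.mpr h𝒜]
  have hSbound : ∑ j, ∑ l, ‖C j l‖ ^ 2 ≤ (A:ℝ) * (c1^2 + A * c2^2) := by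
    have hgle : ∀ j l : Fin M, ‖C j l‖ ^ 2 ≤
        (if (j:ℕ) ∈ 𝒜 then ((if j = l then c1^2 else 0) +
          (if (l:ℕ) ∈ 𝒜 then c2^2 else 0)) else 0) := by
      intro j l
      have h := hent j l
      by_cases hj : (j:ℕ) ∈ 𝒜
      · by_cases hl : (l:ℕ) ∈ 𝒜
        · rw [if_pos (show ((j:ℕ) ∈ 𝒜 ∧ (l:ℕ) ∈ 𝒜) from ⟨hj, hl⟩)] at h
          rw [if_pos hj, if_pos hl]
          by_cases hjl : j = l
          · rw [if_pos hjl] at h ⊢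
            have h1 : ‖C j l‖^2 ≤ c1^2 :=
              pow_le_pow_left₀ (norm_nonneg _) h 2
            nlinarith [sq_nonneg c2]
          · rw [if_neg hjl] at h ⊢
            have h1 : ‖C j l‖^2 ≤ c2^2 :=
              pow_le_pow_left₀ (norm_nonneg _) h 2
            linarith
        · rw [if_neg (fun hh : ((j:ℕ) ∈ 𝒜 ∧ (l:ℕ) ∈ 𝒜) => hl hh.2)] at h
          have h0 : ‖C j l‖ = 0 := le_antisymm h (norm_nonneg _)
          rw [if_pos hj, if_neg hl, h0, add_zero]
          split_ifs
          · nlinarith [sq_nonneg c1]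
          · norm_num
      · rw [if_neg (fun hh : ((j:ℕ) ∈ 𝒜 ∧ (l:ℕ) ∈ 𝒜) => hj hh.1)] at h
        have h0 : ‖C j l‖ = 0 := le_antisymm h (norm_nonneg _)
        rw [if_neg hj, h0]
        norm_num
    calc ∑ j, ∑ l, ‖C j l‖ ^ 2
        ≤ ∑ j : Fin M, ∑ l : Fin M, (if (j:ℕ) ∈ 𝒜 then ((if j = l then c1^2 else 0) +
            (if (l:ℕ) ∈ 𝒜 then c2^2 else 0)) else 0) :=
          Finset.sum_le_sum fun j _ => Finset.sum_le_sum fun l _ => hgle j l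
      _ = (A:ℝ) * (c1^2 + A * c2^2) := by
          have hinner : ∀ j : Fin M, (∑ l : Fin M, (if (j:ℕ) ∈ 𝒜 then
              ((if j = l then c1^2 else 0) + (if (l:ℕ) ∈ 𝒜 then c2^2 else 0)) else 0))
              = (if (j:ℕ) ∈ 𝒜 then c1^2 + (A:ℝ) * c2^2 else 0) := by
            intro j
            by_cases hj : (j:ℕ) ∈ 𝒜
            · simp only [if_pos hj]
              rw [Finset.sum_add_distrib]
              congr 1
              · simp
              · rw [convR (fun _ => c2^2), Finset.sum_const, hcard, nsmul_eq_mul]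
            · simp [hj]
          rw [Finset.sum_congr rfl (fun j _ => hinner j),
            convR (fun _ => c1^2 + (A:ℝ)*c2^2), Finset.sum_const, hcard, nsmul_eq_mul]
  have hR0 : (0:ℝ) ≤ 2 * L * (A:ℝ) ^ ((3:ℝ)/2) / M := by positivity
  have hfin : (A:ℝ) * (c1^2 + A * c2^2) ≤ (2 * L * (A:ℝ) ^ ((3:ℝ)/2) / M)^2 := by
    have hA32 : ((A:ℝ) ^ ((3:ℝ)/2)) ^ 2 = (A:ℝ)^(3:ℕ) := by
      rw [← Real.rpow_natCast ((A:ℝ) ^ ((3:ℝ)/2)) 2, ← Real.rpow_mul (Nat.cast_nonneg A),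
        ← Real.rpow_natCast (A:ℝ) 3]
      norm_num
    have hsA : Real.sqrt A ^ 2 = (A:ℝ) := Real.sq_sqrt (le_of_lt hA0)
    have hLHS : (A:ℝ) * (c1^2 + A * c2^2) = ((A:ℝ)^(3:ℕ) + L^2 * (A:ℝ)^(3:ℕ))/(M:ℝ)^2 := by
      rw [hc1, hc2, div_pow, div_pow, mul_pow, hsA]
      field_simp
    have hRHS : (2 * L * (A:ℝ) ^ ((3:ℝ)/2) / M)^2 = 4*L^2*(A:ℝ)^(3:ℕ)/(M:ℝ)^2 := by
      rw [div_pow, mul_pow, mul_pow, hA32]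
      norm_num
    rw [hLHS, hRHS]
    gcongr
    nlinarith [pow_pos hA0 3, sq_nonneg (L-1), hL]
  have h1 : ‖Matrix.toEuclideanCLM (𝕜 := ℂ) (alphOp M 𝒜)‖^2 ≤
      2 * L * (A:ℝ)^((3:ℝ)/2)/M := by
    rw [hTsq]
    refine (opNorm_le_frob C).trans ?_
    calc Real.sqrt (∑ j, ∑ l, ‖C j l‖^2)
        ≤ Real.sqrt ((2*L*(A:ℝ)^((3:ℝ)/2)/M)^2) := Real.sqrt_le_sqrt (hSbound.trans hfin)
      _ = _ := Real.sqrt_sq hR0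
  rw [← Real.le_sqrt (norm_nonneg _) hR0] at h1
  exact h1
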